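/- For n ≥ 5, in the braid group B_n, if j is an index with |j−i| ≥ 2 and |j−(i+1)| ≥ 2 (so σ_j commutes with both σ_i and σ_{i+1}), then σ_i σ_{i+1}^{-1} equals the commutator [σ_{i+1} σ_i σ_j^{-2}, σ_{i+1} σ_j^{-1}]. -/

import Mathlib

/-- The braid relations on generators indexed by `Fin (n-1)` (0-indexed: generator `i`
corresponds to the standard generator `σ_{i+1}`). -/
def braidRels (n : ℕ) : Set (FreeGroup (Fin (n - 1))) :=
  {r | (∃ i j : Fin (n - 1), (i : ℕ) + 1 = (j : ℕ) ∧
          r = FreeGroup.of i * FreeGroup.of j * FreeGroup.of i *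
              (FreeGroup.of j * FreeGroup.of i * FreeGroup.of j)⁻¹) ∨
       (∃ i j : Fin (n - 1), (i : ℕ) + 2 ≤ (j : ℕ) ∧
          r = FreeGroup.of i * FreeGroup.of j * (FreeGroup.of j * FreeGroup.of i)⁻¹)}

/-- The braid group `B_n`, presented by the standard generators and braid relations. -/
def BraidGroup (n : ℕ) : Type := PresentedGroup (braidRels n)

instance (n : ℕ) : Group (BraidGroup n) := by unfold BraidGroup; infer_instance

/-- The standard generator `σ_{i+1}` of `B_n` (0-indexed). -/
def braidGen (n : ℕ) (i : Fin (n - 1)) : BraidGroup n := PresentedGroup.of i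

open scoped commutatorElement

/-- Relators map to 1 in the presented group. -/
lemma braid_rel_eq_one {n : ℕ} {r : FreeGroup (Fin (n-1))} (hr : r ∈ braidRels n) :
    PresentedGroup.mk (braidRels n) r = 1 := by
  have : r ∈ Subgroup.normalClosure (braidRels n) := Subgroup.subset_normalClosure hr
  exact (QuotientGroup.eq_one_iff r).mpr this

/-- The braid relation in `BraidGroup n`. -/
lemma braid_rel {n : ℕ} (i j : Fin (n-1)) (h : (i:ℕ) + 1 = j) :
    braidGen n i * braidGen n j * braidGen n i = braidGen n j * braidGen n i * braidGen n j := by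
  have := braid_rel_eq_one (n := n) (r := FreeGroup.of i * FreeGroup.of j * FreeGroup.of i *
      (FreeGroup.of j * FreeGroup.of i * FreeGroup.of j)⁻¹) (Or.inl ⟨i, j, h, rfl⟩)
  simp only [map_mul, map_inv] at this
  have h2 := mul_eq_one_iff_eq_inv.mp this
  rw [inv_inv] at h2
  exact h2

/-- The commuting relation in `BraidGroup n`. -/
lemma braid_comm {n : ℕ} (i j : Fin (n-1)) (h : (i:ℕ) + 2 ≤ j) :
    braidGen n i * braidGen n j = braidGen n j * braidGen n i := by
  have := braid_rel_eq_one (n := n) (r := FreeGroup.of i * FreeGroup.of j *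
      (FreeGroup.of j * FreeGroup.of i)⁻¹) (Or.inr ⟨i, j, h, rfl⟩)
  simp only [map_mul, map_inv] at this
  have h2 := mul_eq_one_iff_eq_inv.mp this
  rw [inv_inv] at h2
  exact h2

/-- Abstract commutator identity for `c` commuting with `a` and `b`. -/
lemma braid_commutator_aux {G : Type*} [Group G] (a b c : G)
    (hca : Commute c a) (hcb : Commute c b) :
    ⁅b * a * c⁻¹ * c⁻¹, b * c⁻¹⁆ = b * a * b * a⁻¹ * b⁻¹ * b⁻¹ := by
  simp only [commutatorElement_def, mul_inv_rev, inv_inv, mul_assoc,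
    hca.left_comm, hcb.left_comm, hca.inv_right.left_comm, hcb.inv_right.left_comm,
    hca.inv_left.left_comm, hcb.inv_left.left_comm,
    hca.inv_left.inv_right.left_comm, hcb.inv_left.inv_right.left_comm,
    hca.eq, hcb.eq, hca.inv_right.eq, hcb.inv_right.eq, hca.inv_left.eq, hcb.inv_left.eq,
    hca.inv_left.inv_right.eq, hcb.inv_left.inv_right.eq,
    inv_mul_cancel_left, mul_inv_cancel_left, inv_mul_cancel, mul_inv_cancel, mul_one]

/-- For `n ≥ 5`, if `σ_j` commutes with both `σ_i` and `σ_{i+1}` (i.e. `|j-i| ≥ 2` and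
`|j-(i+1)| ≥ 2`), then `σ_i σ_{i+1}⁻¹ = [σ_{i+1} σ_i σ_j⁻², σ_{i+1} σ_j⁻¹]`. -/
theorem braid_commutator_formula (n : ℕ) (hn : 5 ≤ n)
    (i i1 j : Fin (n - 1)) (h1 : (i : ℕ) + 1 = (i1 : ℕ))
    (hj : (j : ℕ) + 2 ≤ (i : ℕ) ∨ (i : ℕ) + 3 ≤ (j : ℕ)) :
    braidGen n i * (braidGen n i1)⁻¹ =
      ⁅braidGen n i1 * braidGen n i * (braidGen n j)⁻¹ * (braidGen n j)⁻¹,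
        braidGen n i1 * (braidGen n j)⁻¹⁆ := by
  set a := braidGen n i
  set b := braidGen n i1
  set c := braidGen n j with hc
  have hbr : a * b * a = b * a * b := braid_rel i i1 h1
  have hca : Commute c a := by
    rcases hj with h | h
    · exact braid_comm j i h
    · exact (braid_comm i j (by omega)).symm
  have hcb : Commute c b := by
    rcases hj with h | h
    · exact braid_comm j i1 (by omega)
    · exact (braid_comm i1 j (by omega)).symm
  rw [braid_commutator_aux a b c hca hcb, ← hbr]
  group
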